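/- For every real α > 0 and every complex z ≠ 0 with positive real part, ∫_0^∞ e^{-t/z} · F^{(α+1)}(t) dt = z · F^{(α)}(z), where F^{(β)}(w) = ∑_{n=0}^∞ w^n / (n!)^β. -/

import Mathlib

open scoped Nat

open MeasureTheory Set Filter Topology

/-- Summability of `|r|^n / (n!)^α` by the ratio test. -/
lemma aux_summable_real (α : ℝ) (hα : 0 < α) (r : ℝ) :
    Summable (fun n : ℕ => |r| ^ n / ((n ! : ℝ) ^ α)) := by
  apply summable_of_ratio_norm_eventually_le (r := 1/2) (by norm_num)
  have h1 : Tendsto (fun n : ℕ => ((n : ℝ) + 1) ^ α) atTop atTop :=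
    (tendsto_rpow_atTop hα).comp
      (tendsto_atTop_add_const_right atTop 1 tendsto_natCast_atTop_atTop)
  filter_upwards [h1.eventually_ge_atTop (2 * |r|)] with n hn
  have hfact : (0:ℝ) < (n ! : ℝ) := by exact_mod_cast n.factorial_pos
  have hpow : (0:ℝ) < ((n:ℝ)+1) ^ α := by positivity
  have key : ((n+1)! : ℝ) ^ α = ((n:ℝ)+1) ^ α * (n ! : ℝ) ^ α := by
    rw [Nat.factorial_succ, Nat.cast_mul, Real.mul_rpow (by positivity) (by positivity)]
    push_cast; ring_nf
  have e : |r| ^ (n+1) / ((n+1)! : ℝ) ^ α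
      = (|r| / (((n:ℝ)+1) ^ α)) * (|r| ^ n / (n ! : ℝ) ^ α) := by
    rw [key, pow_succ]
    field_simp
  rw [Real.norm_of_nonneg (by positivity), Real.norm_of_nonneg (by positivity), e]
  have hle : |r| / ((n:ℝ)+1)^α ≤ 1/2 := by
    rw [div_le_iff₀ hpow]; linarith
  exact mul_le_mul_of_nonneg_right hle (by positivity)

/-- Summability of `x^n / (n!)^α` for complex `x`. -/
lemma aux_summable (α : ℝ) (hα : 0 < α) (x : ℂ) :
    Summable (fun n : ℕ => x ^ n / (((n ! : ℝ) ^ α : ℝ) : ℂ)) := by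
  apply Summable.of_norm
  have h := aux_summable_real α hα ‖x‖
  refine h.congr fun n => ?_
  have hfact : (0:ℝ) < (n ! : ℝ) := by exact_mod_cast n.factorial_pos
  rw [abs_of_nonneg (norm_nonneg x), norm_div, norm_pow, Complex.norm_real,
    Real.norm_of_nonneg (by positivity)]

/-- Real integrability of `t^n * exp (-(c*t))` on `(0, ∞)`. -/
lemma aux_int_real (c : ℝ) (hc : 0 < c) (n : ℕ) :
    IntegrableOn (fun t : ℝ => t ^ n * Real.exp (-(c * t))) (Set.Ioi 0) := by
  have h := Real.GammaIntegral_convergent (s := (n : ℝ) + 1) (by positivity)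
  have h2 : IntegrableOn (fun x : ℝ =>
      Real.exp (-(c * x)) * (c * x) ^ ((n:ℝ) + 1 - 1)) (Ioi 0) := by
    have h3 := (integrableOn_Ioi_comp_mul_left_iff
      (fun x : ℝ => Real.exp (-x) * x ^ ((n:ℝ) + 1 - 1)) 0 hc).mpr
    simpa [mul_zero] using h3 (by simpa using h)
  have h3 : IntegrableOn (fun x : ℝ =>
      (c ^ n)⁻¹ * (Real.exp (-(c * x)) * (c * x) ^ ((n:ℝ) + 1 - 1))) (Ioi 0) :=
    h2.const_mul ((c ^ n)⁻¹)
  refine IntegrableOn.congr_fun h3 (fun t ht => ?_) measurableSet_Ioi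
  have ht' : (0:ℝ) < t := ht
  have hc' : c ^ n ≠ 0 := by positivity
  rw [add_sub_cancel_right, Real.rpow_natCast, mul_pow]
  field_simp

/-- Complex integrability of `t^n * exp (-(b*t))` on `(0, ∞)` when `0 < b.re`. -/
lemma aux_int (b : ℂ) (hb : 0 < b.re) (n : ℕ) :
    IntegrableOn (fun t : ℝ => (t:ℂ) ^ n * Complex.exp (-(b * t))) (Set.Ioi 0) := by
  refine Integrable.mono' (aux_int_real b.re hb n)
    ((Continuous.aestronglyMeasurable (by fun_prop)).restrict) ?_
  rw [ae_restrict_iff' measurableSet_Ioi]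
  refine Eventually.of_forall fun t ht => ?_
  have ht' : (0:ℝ) < t := ht
  rw [norm_mul, norm_pow, Complex.norm_real, Real.norm_of_nonneg ht'.le,
    Complex.norm_exp]
  have : (-(b * (t:ℂ))).re = -(b.re * t) := by
    simp [Complex.mul_re]
  rw [this]

/-- Tendsto of `x^m * exp (-(c*x))` to `0`. -/
lemma aux_tendsto (c : ℝ) (hc : 0 < c) (m : ℕ) :
    Tendsto (fun x : ℝ => x ^ m * Real.exp (-(c * x))) atTop (𝓝 0) := by
  have h := (Real.tendsto_pow_mul_exp_neg_atTop_nhds_zero m).comp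
      (tendsto_id.const_mul_atTop hc)
  have h2 := h.const_mul ((c ^ m)⁻¹)
  rw [mul_zero] at h2
  refine h2.congr fun x => ?_
  have hc' : c ^ m ≠ 0 := by positivity
  show (c ^ m)⁻¹ * ((c * x) ^ m * Real.exp (-(c * x))) = _
  rw [mul_pow]
  field_simp

/-- The key integral: `∫_0^∞ t^n e^{-bt} dt = n! / b^{n+1}` for `0 < b.re`. -/
lemma aux_val (b : ℂ) (hb : 0 < b.re) (n : ℕ) :
    ∫ t in Set.Ioi (0:ℝ), (t:ℂ) ^ n * Complex.exp (-(b * t)) = n ! / b ^ (n+1) := by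
  have hb0 : b ≠ 0 := fun h => by simp [h] at hb
  have htends : ∀ m : ℕ,
      Tendsto (fun t : ℝ => -b⁻¹ * ((t:ℂ) ^ m * Complex.exp (-(b * t)))) atTop (𝓝 0) := by
    intro m
    rw [tendsto_zero_iff_norm_tendsto_zero]
    have h := (aux_tendsto b.re hb m).const_mul ‖b⁻¹‖
    rw [mul_zero] at h
    refine h.congr' ?_
    filter_upwards [eventually_ge_atTop (0:ℝ)] with t ht
    simp only [norm_mul, norm_neg, norm_pow, Complex.norm_real,
      Complex.norm_exp, Real.norm_eq_abs, abs_of_nonneg ht]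
    have : (-(b * (t:ℂ))).re = -(b.re * t) := by simp [Complex.mul_re]
    rw [this]
  have hderiv : ∀ (m : ℕ) (x : ℝ), HasDerivAt
      (fun t : ℝ => -b⁻¹ * ((t:ℂ) ^ m * Complex.exp (-(b * t))))
      (-b⁻¹ * (((m:ℂ) * (x:ℂ) ^ (m-1)) * Complex.exp (-(b * x))
        + (x:ℂ) ^ m * (Complex.exp (-(b * x)) * -b))) x := by
    intro m x
    have h0 : HasDerivAt (fun w : ℂ => -(b * w)) (-b) (x:ℂ) := by
      simpa using ((hasDerivAt_id (x:ℂ)).const_mul b).fun_neg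
    exact ((((hasDerivAt_pow m (x:ℂ)).mul h0.cexp).const_mul (-b⁻¹))).comp_ofReal
  induction n with
  | zero =>
      have key := integral_Ioi_of_hasDerivAt_of_tendsto' (a := 0)
        (f := fun t : ℝ => -b⁻¹ * ((t:ℂ) ^ 0 * Complex.exp (-(b * t))))
        (f' := fun t : ℝ => (t:ℂ) ^ 0 * Complex.exp (-(b * t)))
        (fun x _ => by
          have := hderiv 0 x
          convert this using 1
          case e'_4 => rfl
          field_simp
          simp)
        (aux_int b hb 0) (htends 0)
      rw [key]
      simp [Complex.exp_zero, one_div]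
  | succ n ih =>
      have hint1 := aux_int b hb (n+1)
      have hint2 := (aux_int b hb n).const_mul (((n:ℂ)+1) * b⁻¹)
      have key := integral_Ioi_of_hasDerivAt_of_tendsto' (a := 0)
        (f := fun t : ℝ => -b⁻¹ * ((t:ℂ) ^ (n+1) * Complex.exp (-(b * t))))
        (f' := fun t : ℝ => (t:ℂ) ^ (n+1) * Complex.exp (-(b * t))
          - ((n:ℂ)+1) * b⁻¹ * ((t:ℂ) ^ n * Complex.exp (-(b * t))))
        (fun x _ => by
          have := hderiv (n+1) x
          convert this using 1
          case e'_4 => rfl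
          simp only [Nat.add_sub_cancel]
          push_cast
          field_simp
          ring)
        (hint1.sub hint2) (htends (n+1))
      rw [integral_sub hint1 hint2, integral_const_mul, ih] at key
      have h0 : (0:ℂ) - (fun t : ℝ => -b⁻¹ * ((t:ℂ) ^ (n+1) * Complex.exp (-(b * t)))) 0
          = 0 := by
        simp
      rw [h0] at key
      have : ∫ t in Set.Ioi (0:ℝ), (t:ℂ) ^ (n+1) * Complex.exp (-(b * t))
          = ((n:ℂ)+1) * b⁻¹ * ((n ! : ℂ) / b ^ (n+1)) := by
        exact sub_eq_zero.mp key
      rw [this, Nat.factorial_succ]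
      push_cast
      field_simp [hb0]
      ring

/-- Real-valued version of the key integral. -/
lemma aux_val_real (c : ℝ) (hc : 0 < c) (n : ℕ) :
    ∫ t in Set.Ioi (0:ℝ), t ^ n * Real.exp (-(c * t)) = n ! / c ^ (n+1) := by
  have h := Real.integral_rpow_mul_exp_neg_mul_Ioi (a := (n:ℝ)+1) (by positivity) hc
  rw [show ((n:ℝ)+1)-1 = (n:ℝ) by ring] at h
  have h2 : ∀ t ∈ Set.Ioi (0:ℝ),
      t ^ ((n:ℝ)) * Real.exp (-(c*t)) = t ^ n * Real.exp (-(c*t)) := by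
    intro t ht
    rw [Real.rpow_natCast]
  rw [setIntegral_congr_fun measurableSet_Ioi h2] at h
  rw [h]
  rw [Real.Gamma_nat_eq_factorial,
    show ((n:ℝ)+1) = ((n+1 : ℕ) : ℝ) by push_cast; ring,
    Real.rpow_natCast, one_div, inv_pow]
  field_simp

theorem stmt_2 (α : ℝ) (hα : 0 < α) (z : ℂ) (hz : z ≠ 0) (hre : 0 < z.re) :
    ∫ t in Set.Ioi (0 : ℝ),
        Complex.exp (-(t : ℂ) / z) * ∑' n : ℕ, (t : ℂ) ^ n / (((n ! : ℝ) ^ (α + 1) : ℝ) : ℂ) =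
      z * ∑' n : ℕ, z ^ n / (((n ! : ℝ) ^ α : ℝ) : ℂ) := by
  set b := z⁻¹ with hbdef
  have hb : 0 < b.re := by
    rw [hbdef, Complex.inv_re]
    exact div_pos hre (Complex.normSq_pos.mpr hz)
  set c := b.re with hcdef
  set F : ℕ → ℝ → ℂ := fun n t =>
    Complex.exp (-(t : ℂ) / z) * ((t : ℂ) ^ n / (((n ! : ℝ) ^ (α + 1) : ℝ) : ℂ)) with hF
  have hFeq : ∀ n : ℕ, ∀ t : ℝ,
      F n t = ((((n ! : ℝ) ^ (α + 1) : ℝ) : ℂ))⁻¹ * ((t:ℂ) ^ n * Complex.exp (-(b * t))) := by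
    intro n t
    rw [hF, hbdef]
    simp only [div_eq_mul_inv, neg_mul]
    ring_nf
  have hFint : ∀ n : ℕ, IntegrableOn (F n) (Set.Ioi 0) := by
    intro n
    have := (aux_int b hb n).const_mul ((((n ! : ℝ) ^ (α + 1) : ℝ) : ℂ))⁻¹
    exact this.congr (ae_of_all _ fun t => (hFeq n t).symm)
  have hCpos : ∀ n : ℕ, (0:ℝ) < (n ! : ℝ) ^ (α + 1) := by
    intro n
    have : (0:ℝ) < (n ! : ℝ) := by exact_mod_cast n.factorial_pos
    positivity
  -- value of each integral norm
  have hnorm : ∀ n : ℕ, (∫ t in Set.Ioi (0:ℝ), ‖F n t‖)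
      = ((n ! : ℝ) ^ (α + 1))⁻¹ * ((n ! : ℝ) / c ^ (n+1)) := by
    intro n
    have heq : ∀ t ∈ Set.Ioi (0:ℝ),
        ‖F n t‖ = ((n ! : ℝ) ^ (α + 1))⁻¹ * (t ^ n * Real.exp (-(c * t))) := by
      intro t ht
      have ht' : (0:ℝ) < t := ht
      rw [hFeq n t]
      simp only [norm_mul, norm_inv, norm_pow, Complex.norm_real,
        Complex.norm_exp, Real.norm_eq_abs, abs_of_nonneg ht'.le,
        abs_of_nonneg (hCpos n).le]
      have : (-(b * (t:ℂ))).re = -(c * t) := by simp [Complex.mul_re, hcdef]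
      rw [this]
    rw [setIntegral_congr_fun measurableSet_Ioi heq, integral_const_mul,
      aux_val_real c hb n]
  have hsum : Summable fun n : ℕ => ∫ t in Set.Ioi (0:ℝ), ‖F n t‖ := by
    have base := (aux_summable_real α hα c⁻¹).mul_left c⁻¹
    refine base.congr fun n => ?_
    have hfac : (0:ℝ) < (n ! : ℝ) := by exact_mod_cast n.factorial_pos
    rw [hnorm n]
    have h1 : (n ! : ℝ) ^ (α + 1) = (n ! : ℝ) ^ α * (n ! : ℝ) := by
      rw [Real.rpow_add hfac, Real.rpow_one]
    rw [h1, abs_of_nonneg (inv_nonneg.mpr hb.le)]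
    have hcα : (0:ℝ) < (n ! : ℝ) ^ α := by positivity
    field_simp
    rw [pow_succ]
    ring
    rw [inv_pow, mul_assoc, mul_inv_cancel₀ (pow_ne_zero _ hb.ne'), mul_one]
  -- swap integral and sum
  have hswap := integral_tsum_of_summable_integral_norm (μ := volume.restrict (Set.Ioi 0))
    hFint hsum
  have hlhs : ∫ t in Set.Ioi (0:ℝ),
      Complex.exp (-(t : ℂ) / z) * ∑' n : ℕ, (t : ℂ) ^ n / (((n ! : ℝ) ^ (α + 1) : ℝ) : ℂ)
      = ∫ t in Set.Ioi (0:ℝ), ∑' n : ℕ, F n t := by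
    refine integral_congr_ae (ae_of_all _ fun t => ?_)
    rw [hF]
    exact (tsum_mul_left).symm
  rw [hlhs, ← hswap]
  -- compute each integral
  have hterm : ∀ n : ℕ, (∫ t in Set.Ioi (0:ℝ), F n t)
      = z * (z ^ n / (((n ! : ℝ) ^ α : ℝ) : ℂ)) := by
    intro n
    have : (∫ t in Set.Ioi (0:ℝ), F n t)
        = ((((n ! : ℝ) ^ (α + 1) : ℝ) : ℂ))⁻¹ * ((n ! : ℂ) / b ^ (n+1)) := by
      rw [integral_congr_ae (ae_of_all _ fun t => hFeq n t), integral_const_mul,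
        aux_val b hb n]
    rw [this]
    have hfac : (0:ℝ) < (n ! : ℝ) := by exact_mod_cast n.factorial_pos
    have h1 : (n ! : ℝ) ^ (α + 1) = (n ! : ℝ) ^ α * (n ! : ℝ) := by
      rw [Real.rpow_add hfac, Real.rpow_one]
    have hcα : (0:ℝ) < (n ! : ℝ) ^ α := by positivity
    have hfC : ((n ! : ℕ) : ℂ) ≠ 0 := Nat.cast_ne_zero.mpr n.factorial_ne_zero
    have hcC : (((n ! : ℝ) ^ α : ℝ) : ℂ) ≠ 0 := by exact_mod_cast hcα.ne'
    rw [h1, hbdef, inv_pow]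
    push_cast
    field_simp [hfC, hcC, hz]
    ring
  rw [tsum_congr hterm, tsum_mul_left]
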